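/- Let r ≥ 1 be an integer and let (α;β) = (α₁,…,α_{r+1};β₁,…,β_r) ∈ 𝒰_r be such that no β_i + 1 is a non-positive integer. Then for every integer k ≥ 1, (α₁)_k⋯(α_{r+1})_k/((β₁+1)_k⋯(β_r+1)_k · k!) = (α₁+1)_k⋯(α_{r+1}+1)_k/((β₁+1)_k⋯(β_r+1)_k · k!) − (α₁+1)_{k−1}⋯(α_{r+1}+1)_{k−1}/((β₁+1)_{k−1}⋯(β_r+1)_{k−1} · (k−1)!). -/

import Mathlib

noncomputable def poch (a : ℂ) (k : ℕ) : ℂ := Polynomial.eval a (ascPochhammer ℂ k)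

noncomputable def esym {n : ℕ} (v : Fin n → ℂ) (l : ℕ) : ℂ :=
  ∑ t ∈ Finset.powersetCard l (Finset.univ : Finset (Fin n)), ∏ i ∈ t, v i

lemma poch_zero (a : ℂ) : poch a 0 = 1 := by simp [poch]

lemma poch_succ_right (a : ℂ) (n : ℕ) : poch a (n+1) = poch a n * (a + n) := by
  simp [poch, ascPochhammer_succ_right]

lemma poch_succ_left (a : ℂ) (n : ℕ) : poch a (n+1) = a * poch (a+1) n := by
  simp [poch, ascPochhammer_succ_left, Polynomial.eval_comp]

lemma poch_ne_zero (a : ℂ) (h : ∀ m : ℕ, a ≠ -(m : ℂ)) (k : ℕ) : poch a k ≠ 0 := by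
  induction k with
  | zero => simp [poch_zero]
  | succ n ih =>
    rw [poch_succ_right]
    refine mul_ne_zero ih ?_
    intro hc
    exact h n (by linear_combination hc)

lemma esym_zero {n : ℕ} (v : Fin n → ℂ) : esym v 0 = 1 := by
  simp [esym]

lemma prod_eq_sum_esym {n : ℕ} (v : Fin n → ℂ) (x : ℂ) :
    ∏ i, (v i + x) = ∑ l ∈ Finset.range (n+1), esym v l * x ^ (n - l) := by
  classical
  rw [Finset.prod_add]
  rw [show (Finset.univ : Finset (Fin n)).powerset
      = (Finset.range ((Finset.univ : Finset (Fin n)).card + 1)).disjiUnion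
          (fun i => Finset.powersetCard i Finset.univ)
          (show Set.PairwiseDisjoint _ _ from
            (Finset.univ : Finset (Fin n)).pairwise_disjoint_powersetCard.set_pairwise _)
    from Finset.powerset_card_disjiUnion _]
  rw [Finset.sum_disjiUnion]
  simp only [Finset.card_univ, Fintype.card_fin]
  refine Finset.sum_congr rfl fun l hl => ?_
  rw [esym, Finset.sum_mul]
  refine Finset.sum_congr rfl fun t ht => ?_
  have htc : t.card = l := (Finset.mem_powersetCard.mp ht).2
  rw [Finset.prod_const, Finset.card_sdiff_of_subset (Finset.subset_univ t),
    Finset.card_univ, Fintype.card_fin, htc]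

def inU (r : ℕ) (α : Fin (r+1) → ℂ) (β : Fin r → ℂ) : Prop :=
  ∀ l : ℕ, 1 ≤ l → l ≤ r → esym α l = esym β l

lemma esym_top {r : ℕ} (α : Fin (r+1) → ℂ) : esym α (r+1) = ∏ i, α i := by
  have h : (Finset.univ : Finset (Fin (r+1))).card = r + 1 := by
    simp
  have h2 := Finset.powersetCard_self (Finset.univ : Finset (Fin (r+1)))
  rw [h] at h2
  rw [esym, h2, Finset.sum_singleton]

lemma key_identity {r : ℕ} (α : Fin (r+1) → ℂ) (β : Fin r → ℂ) (hU : inU r α β) (x : ℂ) :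
    ∏ i, (α i + x) = ∏ i, α i + x * ∏ i, (β i + x) := by
  rw [prod_eq_sum_esym α x, prod_eq_sum_esym β x, Finset.sum_range_succ, Nat.sub_self,
    pow_zero, mul_one, esym_top, Finset.mul_sum, add_comm]
  congr 1
  refine Finset.sum_congr rfl fun l hl => ?_
  have hl' : l ≤ r := Nat.lt_succ_iff.mp (Finset.mem_range.mp hl)
  have h1 : esym α l = esym β l := by
    rcases Nat.eq_zero_or_pos l with h | h
    · subst h; rw [esym_zero, esym_zero]
    · exact hU l h hl'
  have h2 : r + 1 - l = (r - l) + 1 := by omega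
  rw [h1, h2, pow_succ]
  ring

/-- The term-by-term identity used in the proof of the generalized Euler transformation. -/
theorem termwise_identity
    (r : ℕ) (hr : 1 ≤ r) (α : Fin (r+1) → ℂ) (β : Fin r → ℂ)
    (hU : inU r α β)
    (hβ : ∀ i : Fin r, ∀ m : ℕ, β i + 1 ≠ -(m : ℂ))
    (k : ℕ) (hk : 1 ≤ k) :
    (∏ i, poch (α i) k) / ((∏ i, poch (β i + 1) k) * (k.factorial : ℂ))
      = (∏ i, poch (α i + 1) k) / ((∏ i, poch (β i + 1) k) * (k.factorial : ℂ))
        - (∏ i, poch (α i + 1) (k-1)) / ((∏ i, poch (β i + 1) (k-1)) * ((k-1).factorial : ℂ)) := by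
  obtain ⟨n, rfl⟩ : ∃ n, k = n + 1 := ⟨k - 1, (Nat.succ_pred_eq_of_pos hk).symm⟩
  simp only [Nat.add_sub_cancel]
  set x : ℂ := (n : ℂ) + 1 with hx
  have hprodα : ∏ i, poch (α i) (n+1) = (∏ i, α i) * ∏ i, poch (α i + 1) n := by
    simp [poch_succ_left, Finset.prod_mul_distrib]
  have hprodα1 : ∏ i, poch (α i + 1) (n+1)
      = (∏ i, poch (α i + 1) n) * ∏ i, (α i + x) := by
    simp only [poch_succ_right, Finset.prod_mul_distrib]
    congr 1
    refine Finset.prod_congr rfl fun i _ => ?_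
    rw [hx]; ring
  have hprodβ1 : ∏ i, poch (β i + 1) (n+1)
      = (∏ i, poch (β i + 1) n) * ∏ i, (β i + x) := by
    simp only [poch_succ_right, Finset.prod_mul_distrib]
    congr 1
    refine Finset.prod_congr rfl fun i _ => ?_
    rw [hx]; ring
  have hB : (∏ i, poch (β i + 1) n) ≠ 0 :=
    Finset.prod_ne_zero_iff.mpr fun i _ => poch_ne_zero _ (hβ i) n
  have hQ : (∏ i, (β i + x)) ≠ 0 := by
    refine Finset.prod_ne_zero_iff.mpr fun i _ => ?_
    intro hc
    exact hβ i n (by rw [hx] at hc; linear_combination hc)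
  have hF : ((n.factorial : ℂ)) ≠ 0 := Nat.cast_ne_zero.mpr (Nat.factorial_ne_zero n)
  have hxne : x ≠ 0 := by
    rw [hx]
    exact Nat.cast_add_one_ne_zero n
  have hfact : ((n+1).factorial : ℂ) = x * (n.factorial : ℂ) := by
    rw [Nat.factorial_succ, hx]; push_cast; ring
  have hkey := key_identity α β hU x
  rw [hprodα, hprodα1, hprodβ1, hfact, hkey]
  field_simp
  ring
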